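/- arXiv:2502.21136 — 2 statements merged into one kernel-verified Lean document; each statement's English description precedes it below -/
import Mathlib

section
/- Suppose r is the nonzero Gauss remainder of nonzero a, b ∈ ℤ[i] with φ(r) ≥ φ(b) = n. If Im(u_b·b)·Im(u_r·r) ≥ 0, then φ(r - (u_b/u_r)·b) < φ(b). -/
open GaussianInt

noncomputable section

/-- The sequence w: w_{2k} = 3·2^k, w_{2k+1} = 4·2^k. -/
def w (n : ℕ) : ℤ := if n % 2 = 0 then 3 * 2 ^ (n / 2) else 4 * 2 ^ (n / 2)

/-- 2-adic valuation of gcd(Re z, Im z). -/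
def v2 (z : GaussianInt) : ℕ := padicValNat 2 (Int.gcd z.re z.im)

/-- ℓ₁ norm. -/
def l1 (z : GaussianInt) : ℤ := |z.re| + |z.im|

/-- ℓ∞ norm. -/
def linf (z : GaussianInt) : ℤ := max |z.re| |z.im|

/-- m(z) = min(|Re z|, |Im z|). -/
def mm (z : GaussianInt) : ℤ := min |z.re| |z.im|

/-- The algebraic norm. -/
def Nm (z : GaussianInt) : ℤ := z.re ^ 2 + z.im ^ 2

/-- Graves' formula for the minimal Euclidean function φ on ℤ[i]. -/
def phi (z : GaussianInt) : ℕ :=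
  let j := v2 z
  let n := sInf {n : ℕ | |z.re| ≤ 2 ^ j * (w n - 2) ∧ |z.im| ≤ 2 ^ j * (w n - 2)}
  if l1 z ≤ 2 ^ j * (w (n + 1) - 3) then n + 2 * j else n + 2 * j + 1

/-- Nearest integer, rounding halves down. -/
def nint (x : ℚ) : ℤ := if x - ⌊x⌋ ≤ 1 / 2 then ⌊x⌋ else ⌈x⌉

/-- Gauss quotient: coordinatewise nearest-integer rounding of a·conj(b)/Nm(b). -/
def gq (a b : GaussianInt) : GaussianInt :=
  ⟨nint (((a.re * b.re + a.im * b.im : ℤ) : ℚ) / ((b.re ^ 2 + b.im ^ 2 : ℤ) : ℚ)),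
   nint (((a.im * b.re - a.re * b.im : ℤ) : ℚ) / ((b.re ^ 2 + b.im ^ 2 : ℤ) : ℚ))⟩

/-- Gauss remainder. -/
def gr (a b : GaussianInt) : GaussianInt := a - gq a b * b

/-- The imaginary unit in ℤ[i]. -/
def Ii : GaussianInt := ⟨0, 1⟩

/-- The canonical unit u_z. -/
def uz (z : GaussianInt) : GaussianInt :=
  if |z.re| > |z.im| then (if 0 < z.re then 1 else -1)
  else if |z.im| > |z.re| then (if 0 < z.im then -Ii else Ii)
  else if 0 < z.re then (if 0 < z.im then 1 else Ii)
  else (if 0 < z.im then -Ii else -1)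

/-- s(z) = sgn(Im(u_z·z)). -/
def sfun (z : GaussianInt) : ℤ := Int.sign ((uz z * z).im)



/-! ### w lemmas -/

lemma w_twoMul (s : ℕ) : w (2 * s) = 3 * 2 ^ s := by
  simp [w, Nat.mul_div_cancel_left, Nat.mul_mod_right]

lemma w_twoMulAdd (s : ℕ) : w (2 * s + 1) = 4 * 2 ^ s := by
  have h1 : (2 * s + 1) % 2 = 1 := by omega
  have h2 : (2 * s + 1) / 2 = s := by omega
  simp [w, h1, h2]

lemma w_add_two (n : ℕ) : w (n + 2) = 2 * w n := by
  rcases Nat.even_or_odd n with ⟨s, hs⟩ | ⟨s, hs⟩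
  · subst hs
    rw [show s + s = 2 * s by ring, show 2 * s + 2 = 2 * (s + 1) by ring, w_twoMul, w_twoMul]
    ring
  · subst hs
    rw [show 2 * s + 1 + 2 = 2 * (s + 1) + 1 by ring, w_twoMulAdd, w_twoMulAdd]
    ring

lemma w_mono : Monotone w := by
  have step : ∀ n, w n ≤ w (n + 1) := by
    intro n
    rcases Nat.even_or_odd n with ⟨s, hs⟩ | ⟨s, hs⟩
    · subst hs
      rw [show s + s = 2 * s by ring, w_twoMul, w_twoMulAdd]
      nlinarith [pow_pos (by norm_num : (0:ℤ) < 2) s]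
    · subst hs
      rw [show 2 * s + 1 + 1 = 2 * (s + 1) by ring, w_twoMulAdd, w_twoMul, pow_succ]
      nlinarith [pow_pos (by norm_num : (0:ℤ) < 2) s]
  exact monotone_nat_of_le_succ step

lemma three_le_w (n : ℕ) : 3 ≤ w n := by
  have := w_mono (Nat.zero_le n)
  simpa [w] using this

lemma le_w (n : ℕ) : (n : ℤ) + 3 ≤ w n := by
  induction n using Nat.strong_induction_on with
  | _ n ih =>
    match n with
    | 0 => simp [w]
    | 1 => simp [w]
    | (m + 2) =>
      have h := ih m (by omega)
      rw [w_add_two]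
      push_cast
      linarith [three_le_w m]

/-! ### basic v2 / linf facts -/

lemma v2_dvd_re (z : GaussianInt) : (2:ℤ) ^ (v2 z) ∣ z.re := by
  rcases eq_or_ne (Int.gcd z.re z.im) 0 with h | h
  · obtain ⟨h1, h2⟩ := Int.gcd_eq_zero_iff.mp h
    simp [h1]
  · have h1 : (2:ℕ) ^ (v2 z) ∣ Int.gcd z.re z.im := pow_padicValNat_dvd
    have h2 : ((Int.gcd z.re z.im : ℤ)) ∣ z.re := Int.gcd_dvd_left _ _
    exact dvd_trans (by exact_mod_cast Int.natCast_dvd_natCast.mpr h1) h2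

lemma v2_dvd_im (z : GaussianInt) : (2:ℤ) ^ (v2 z) ∣ z.im := by
  rcases eq_or_ne (Int.gcd z.re z.im) 0 with h | h
  · obtain ⟨h1, h2⟩ := Int.gcd_eq_zero_iff.mp h
    simp [h2]
  · have h1 : (2:ℕ) ^ (v2 z) ∣ Int.gcd z.re z.im := pow_padicValNat_dvd
    have h2 : ((Int.gcd z.re z.im : ℤ)) ∣ z.im := Int.gcd_dvd_right _ _
    exact dvd_trans (by exact_mod_cast Int.natCast_dvd_natCast.mpr h1) h2

lemma two_pow_le_linf (z : GaussianInt) (hz : z ≠ 0) : 2 ^ (v2 z) ≤ linf z := by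
  have h : z.re ≠ 0 ∨ z.im ≠ 0 := by
    by_contra h
    push_neg at h
    exact hz (Zsqrtd.ext h.1 h.2)
  have h2 : (0:ℤ) < 2 ^ (v2 z) := pow_pos (by norm_num) _
  rcases h with h | h
  · have := Int.le_of_dvd (abs_pos.mpr h) ((dvd_abs _ _).mpr (v2_dvd_re z))
    simp only [linf]; omega
  · have := Int.le_of_dvd (abs_pos.mpr h) ((dvd_abs _ _).mpr (v2_dvd_im z))
    simp only [linf]; omega

/-! ### phi characterization -/

lemma l1_le_two_linf (z : GaussianInt) : l1 z ≤ 2 * linf z := by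
  simp only [l1, linf]
  have := abs_nonneg z.re
  have := abs_nonneg z.im
  omega

lemma phi_le_iff (z : GaussianInt) (N : ℕ) :
    phi z ≤ N ↔ 2 * v2 z ≤ N ∧ linf z ≤ 2 ^ (v2 z) * (w (N - 2 * v2 z) - 2) ∧
      l1 z ≤ 2 ^ (v2 z) * (w (N - 2 * v2 z + 1) - 3) := by
  set j := v2 z with hj
  set S : Set ℕ := {n : ℕ | |z.re| ≤ 2 ^ j * (w n - 2) ∧ |z.im| ≤ 2 ^ j * (w n - 2)} with hS
  have hpow1 : (1:ℤ) ≤ 2 ^ j := one_le_pow₀ (by norm_num)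
  have hbound : ∀ (c : ℤ) (t : ℕ), c ≤ (t:ℤ) → c ≤ 2 ^ j * (w t - 2) := by
    intro c t hct
    have h1 : (t:ℤ) + 1 ≤ w t - 2 := by linarith [le_w t]
    have h2 : w t - 2 ≤ 2 ^ j * (w t - 2) := le_mul_of_one_le_left (by linarith) hpow1
    linarith
  have hSne : S.Nonempty := by
    refine ⟨(|z.re| + |z.im|).toNat, ?_, ?_⟩ <;>
    · apply hbound
      have := abs_nonneg z.re
      have := abs_nonneg z.im
      omega
  have hmono : ∀ ⦃m t : ℕ⦄, m ∈ S → m ≤ t → t ∈ S := by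
    intro m t hm hmt
    have hw : w m ≤ w t := w_mono hmt
    have h2 : 2 ^ j * (w m - 2) ≤ 2 ^ j * (w t - 2) := by
      apply mul_le_mul_of_nonneg_left (by linarith) (by positivity)
    exact ⟨le_trans hm.1 h2, le_trans hm.2 h2⟩
  set n0 := sInf S with hn0
  have hmem : n0 ∈ S := Nat.sInf_mem hSne
  have hphi : phi z = if l1 z ≤ 2 ^ j * (w (n0 + 1) - 3) then n0 + 2 * j else n0 + 2 * j + 1 := rfl
  have hlinf_mem : ∀ t : ℕ, t ∈ S ↔ linf z ≤ 2 ^ j * (w t - 2) := by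
    intro t
    simp only [hS, Set.mem_setOf_eq, linf]
    omega
  constructor
  · intro hle
    by_cases hc : l1 z ≤ 2 ^ j * (w (n0 + 1) - 3)
    · rw [hphi, if_pos hc] at hle
      have h2j : 2 * j ≤ N := by omega
      have hnt : n0 ≤ N - 2 * j := by omega
      refine ⟨h2j, (hlinf_mem _).mp (hmono hmem hnt), ?_⟩
      calc l1 z ≤ 2 ^ j * (w (n0 + 1) - 3) := hc
        _ ≤ 2 ^ j * (w (N - 2 * j + 1) - 3) := by
            apply mul_le_mul_of_nonneg_left (by linarith [w_mono (by omega : n0 + 1 ≤ N - 2 * j + 1)]) (by positivity)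
    · rw [hphi, if_neg hc] at hle
      have h2j : 2 * j ≤ N := by omega
      have hnt : n0 + 1 ≤ N - 2 * j := by omega
      refine ⟨h2j, (hlinf_mem _).mp (hmono hmem (by omega)), ?_⟩
      have h1 : linf z ≤ 2 ^ j * (w n0 - 2) := (hlinf_mem _).mp hmem
      have h2 : l1 z ≤ 2 ^ j * (2 * w n0 - 4) := by
        have := l1_le_two_linf z
        calc l1 z ≤ 2 * (2 ^ j * (w n0 - 2)) := by linarith
          _ = 2 ^ j * (2 * w n0 - 4) := by ring
      have h3 : 2 * w n0 = w (n0 + 2) := (w_add_two n0).symm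
      have h4 : w (n0 + 2) ≤ w (N - 2 * j + 1) := w_mono (by omega)
      calc l1 z ≤ 2 ^ j * (2 * w n0 - 4) := h2
        _ ≤ 2 ^ j * (w (N - 2 * j + 1) - 3) := by
            apply mul_le_mul_of_nonneg_left (by omega) (by positivity)
  · rintro ⟨h2j, hli, hl1⟩
    have hntS : N - 2 * j ∈ S := (hlinf_mem _).mpr hli
    have hle : n0 ≤ N - 2 * j := Nat.sInf_le hntS
    rcases eq_or_lt_of_le hle with heq | hlt
    · have hc : l1 z ≤ 2 ^ j * (w (n0 + 1) - 3) := by rw [heq]; exact hl1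
      rw [hphi, if_pos hc]
      omega
    · rw [hphi]
      split <;> omega

/-! ### remainder bounds -/

lemma nint_bound (x : ℚ) : |x - nint x| ≤ 1 / 2 := by
  unfold nint
  split_ifs with h
  · have h0 : (0:ℚ) ≤ x - ⌊x⌋ := by
      have := Int.floor_le x
      linarith
    rw [abs_of_nonneg h0]
    exact h
  · push_neg at h
    have hne : (⌈x⌉:ℚ) = ⌊x⌋ + 1 := by
      have hcl : ⌈x⌉ ≤ ⌊x⌋ + 1 := Int.ceil_le_floor_add_one x
      have hfc : ⌊x⌋ ≤ ⌈x⌉ := Int.floor_le_ceil x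
      have hne' : ⌈x⌉ = ⌊x⌋ + 1 := by
        by_contra hcon
        have heq : ⌈x⌉ = ⌊x⌋ := by omega
        have h1 : x ≤ (⌈x⌉:ℚ) := Int.le_ceil x
        have h2 : (⌊x⌋:ℚ) ≤ x := Int.floor_le x
        rw [heq] at h1
        linarith
      rw [hne']
      push_cast; ring
    have hle : x ≤ ⌈x⌉ := Int.le_ceil x
    have h0 : x - ⌈x⌉ ≤ 0 := by linarith
    rw [abs_of_nonpos h0, hne]
    linarith

lemma gr_bounds (a b : GaussianInt) (hb : b ≠ 0) :
    2 * |(gr a b).re * b.re + (gr a b).im * b.im| ≤ Nm b ∧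
    2 * |(gr a b).im * b.re - (gr a b).re * b.im| ≤ Nm b := by
  have hN : 0 < Nm b := by
    have h : b.re ≠ 0 ∨ b.im ≠ 0 := by
      by_contra h
      push_neg at h
      exact hb (Zsqrtd.ext h.1 h.2)
    rcases h with h | h <;> · unfold Nm; positivity
  set A : ℤ := a.re * b.re + a.im * b.im with hA
  set B : ℤ := a.im * b.re - a.re * b.im with hB
  set N : ℤ := Nm b with hNdef
  have hNeq : N = b.re ^ 2 + b.im ^ 2 := rfl
  set qre : ℤ := nint ((A : ℚ) / (N : ℚ)) with hqre
  set qim : ℤ := nint ((B : ℚ) / (N : ℚ)) with hqim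
  have hgq : gq a b = ⟨qre, qim⟩ := by
    unfold gq
    congr 1 <;> · rw [hqre] <;> rw [hqim] <;> norm_cast
  have key : ∀ C : ℤ, 2 * |C - nint ((C:ℚ)/(N:ℚ)) * N| ≤ N := by
    intro C
    have hNQ : (0:ℚ) < (N:ℚ) := by exact_mod_cast hN
    have hbnd := nint_bound ((C:ℚ)/(N:ℚ))
    set q : ℤ := nint ((C:ℚ)/(N:ℚ)) with hq
    have h1 : |(C:ℚ) - q * N| ≤ N / 2 := by
      have h2 : (C:ℚ) - q * N = ((C:ℚ)/(N:ℚ) - q) * N := by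
        field_simp
      rw [h2, abs_mul, abs_of_pos hNQ]
      calc |(C:ℚ)/(N:ℚ) - q| * N ≤ (1/2) * N := by
            apply mul_le_mul_of_nonneg_right hbnd (le_of_lt hNQ)
        _ = N / 2 := by ring
    have h3 : (2:ℚ) * |(C:ℚ) - q * N| ≤ N := by linarith
    have h4 : ((2 * |C - q * N| : ℤ) : ℚ) ≤ ((N:ℤ):ℚ) := by
      push_cast
      convert h3 using 2
    exact_mod_cast h4
  have hre : (gr a b).re = a.re - (qre * b.re - qim * b.im) := by
    unfold gr
    rw [hgq]
    simp [Zsqrtd.re_sub, Zsqrtd.re_mul]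
    ring
  have him : (gr a b).im = a.im - (qre * b.im + qim * b.re) := by
    unfold gr
    rw [hgq]
    simp [Zsqrtd.im_sub, Zsqrtd.im_mul]
  constructor
  · have heq : (gr a b).re * b.re + (gr a b).im * b.im = A - qre * N := by
      rw [hre, him, hA, hNeq]; ring
    rw [heq]
    exact key A
  · have heq : (gr a b).im * b.re - (gr a b).re * b.im = B - qim * N := by
      rw [hre, him, hB, hNeq]; ring
    rw [heq]
    exact key B

/-! ### unit lemmas -/

def IsU (u : GaussianInt) : Prop := u = 1 ∨ u = -1 ∨ u = Ii ∨ u = -Ii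

lemma isU_uz (z : GaussianInt) : IsU (uz z) := by
  unfold uz IsU
  split_ifs <;> tauto

lemma isU_star (u : GaussianInt) (hu : IsU u) : IsU (star u) := by
  rcases hu with rfl | rfl | rfl | rfl <;> unfold IsU <;>
    [skip; skip; skip; skip] <;>
    first
      | exact Or.inl (by decide)
      | exact Or.inr (Or.inl (by decide))
      | exact Or.inr (Or.inr (Or.inl (by decide)))
      | exact Or.inr (Or.inr (Or.inr (by decide)))

lemma isU_mul (u v : GaussianInt) (hu : IsU u) (hv : IsU v) : IsU (u * v) := by
  rcases hu with rfl | rfl | rfl | rfl <;> rcases hv with rfl | rfl | rfl | rfl <;>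
    unfold IsU <;>
    first
      | exact Or.inl (by decide)
      | exact Or.inr (Or.inl (by decide))
      | exact Or.inr (Or.inr (Or.inl (by decide)))
      | exact Or.inr (Or.inr (Or.inr (by decide)))

lemma isU_mul_star (u : GaussianInt) (hu : IsU u) : u * star u = 1 := by
  rcases hu with rfl | rfl | rfl | rfl <;> decide

lemma one_mul_re (z : GaussianInt) : ((1 : GaussianInt) * z).re = z.re := by simp
lemma one_mul_im (z : GaussianInt) : ((1 : GaussianInt) * z).im = z.im := by simp
lemma negone_mul_re (z : GaussianInt) : ((-1 : GaussianInt) * z).re = -z.re := by simp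
lemma negone_mul_im (z : GaussianInt) : ((-1 : GaussianInt) * z).im = -z.im := by simp
lemma Ii_mul_re (z : GaussianInt) : (Ii * z).re = -z.im := by simp [Ii, Zsqrtd.re_mul]
lemma Ii_mul_im (z : GaussianInt) : (Ii * z).im = z.re := by simp [Ii, Zsqrtd.im_mul]
lemma negIi_mul_re (z : GaussianInt) : ((-Ii) * z).re = z.im := by simp [Ii, Zsqrtd.re_mul]
lemma negIi_mul_im (z : GaussianInt) : ((-Ii) * z).im = -z.re := by simp [Ii, Zsqrtd.im_mul]

lemma isU_abs (u t : GaussianInt) (hu : IsU u) :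
    (|(u * t).re| = |t.re| ∧ |(u * t).im| = |t.im|) ∨
    (|(u * t).re| = |t.im| ∧ |(u * t).im| = |t.re|) := by
  rcases hu with rfl | rfl | rfl | rfl
  · left; rw [one_mul_re, one_mul_im]; exact ⟨rfl, rfl⟩
  · left; rw [negone_mul_re, negone_mul_im, abs_neg, abs_neg]; exact ⟨rfl, rfl⟩
  · right; rw [Ii_mul_re, Ii_mul_im]; exact ⟨abs_neg t.im, rfl⟩
  · right; rw [negIi_mul_re, negIi_mul_im, abs_neg]; exact ⟨rfl, rfl⟩

lemma isU_gcd (u t : GaussianInt) (hu : IsU u) :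
    Int.gcd (u * t).re (u * t).im = Int.gcd t.re t.im := by
  have h := isU_abs u t hu
  have habs : ∀ x y : ℤ, |x| = |y| → x.natAbs = y.natAbs := by
    intro x y hxy
    have h2 : (x.natAbs : ℤ) = (y.natAbs : ℤ) := by
      rw [Int.abs_eq_natAbs] at hxy
      rw [Int.abs_eq_natAbs] at hxy
      exact hxy
    exact_mod_cast h2
  unfold Int.gcd
  rcases h with ⟨h1, h2⟩ | ⟨h1, h2⟩
  · rw [habs _ _ h1, habs _ _ h2]
  · rw [habs _ _ h1, habs _ _ h2, Nat.gcd_comm]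

lemma isU_v2 (u t : GaussianInt) (hu : IsU u) : v2 (u * t) = v2 t := by
  unfold v2
  rw [isU_gcd u t hu]

lemma isU_l1 (u t : GaussianInt) (hu : IsU u) : l1 (u * t) = l1 t := by
  have h := isU_abs u t hu
  unfold l1
  rcases h with ⟨h1, h2⟩ | ⟨h1, h2⟩ <;> omega

lemma isU_phi (u t : GaussianInt) (hu : IsU u) : phi (u * t) = phi t := by
  have habs := isU_abs u t hu
  have hv2 := isU_v2 u t hu
  have hset : {n : ℕ | |(u*t).re| ≤ 2 ^ (v2 t) * (w n - 2) ∧ |(u*t).im| ≤ 2 ^ (v2 t) * (w n - 2)}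
      = {n : ℕ | |t.re| ≤ 2 ^ (v2 t) * (w n - 2) ∧ |t.im| ≤ 2 ^ (v2 t) * (w n - 2)} := by
    ext n
    simp only [Set.mem_setOf_eq]
    rcases habs with ⟨h1, h2⟩ | ⟨h1, h2⟩ <;> rw [h1, h2] <;> tauto
  show (if l1 (u*t) ≤ 2 ^ (v2 (u*t)) * (w ((sInf {n : ℕ | |(u*t).re| ≤ 2 ^ (v2 (u*t)) * (w n - 2) ∧ |(u*t).im| ≤ 2 ^ (v2 (u*t)) * (w n - 2)}) + 1) - 3)
      then (sInf {n : ℕ | |(u*t).re| ≤ 2 ^ (v2 (u*t)) * (w n - 2) ∧ |(u*t).im| ≤ 2 ^ (v2 (u*t)) * (w n - 2)}) + 2 * (v2 (u*t))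
      else (sInf {n : ℕ | |(u*t).re| ≤ 2 ^ (v2 (u*t)) * (w n - 2) ∧ |(u*t).im| ≤ 2 ^ (v2 (u*t)) * (w n - 2)}) + 2 * (v2 (u*t)) + 1) = phi t
  rw [isU_l1 u t hu, hv2, hset]
  rfl

lemma uz_spec (z : GaussianInt) (hz : z ≠ 0) :
    (uz z * z).re = linf z ∧ |(uz z * z).im| = mm z := by
  have hre := abs_cases z.re
  have him := abs_cases z.im
  have hmax := max_cases |z.re| |z.im|
  have hmin := min_cases |z.re| |z.im|
  unfold uz
  simp only [linf, mm]
  split_ifs with h1 h2 h3 h4 h5 h6 h7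
  · rw [one_mul_re, one_mul_im]
    rcases hre with ⟨a1, a2⟩ | ⟨a1, a2⟩ <;> rcases him with ⟨b1, b2⟩ | ⟨b1, b2⟩ <;> omega
  · rw [negone_mul_re, negone_mul_im, abs_neg]
    rcases hre with ⟨a1, a2⟩ | ⟨a1, a2⟩ <;> rcases him with ⟨b1, b2⟩ | ⟨b1, b2⟩ <;> omega
  · rw [negIi_mul_re, negIi_mul_im, abs_neg]
    rcases hre with ⟨a1, a2⟩ | ⟨a1, a2⟩ <;> rcases him with ⟨b1, b2⟩ | ⟨b1, b2⟩ <;> omega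
  · rw [Ii_mul_re, Ii_mul_im]
    rcases hre with ⟨a1, a2⟩ | ⟨a1, a2⟩ <;> rcases him with ⟨b1, b2⟩ | ⟨b1, b2⟩ <;> omega
  · rw [one_mul_re, one_mul_im]
    rcases hre with ⟨a1, a2⟩ | ⟨a1, a2⟩ <;> rcases him with ⟨b1, b2⟩ | ⟨b1, b2⟩ <;> omega
  · rw [Ii_mul_re, Ii_mul_im]
    rcases hre with ⟨a1, a2⟩ | ⟨a1, a2⟩ <;> rcases him with ⟨b1, b2⟩ | ⟨b1, b2⟩ <;> omega
  · rw [negIi_mul_re, negIi_mul_im, abs_neg]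
    rcases hre with ⟨a1, a2⟩ | ⟨a1, a2⟩ <;> rcases him with ⟨b1, b2⟩ | ⟨b1, b2⟩ <;> omega
  · rw [negone_mul_re, negone_mul_im, abs_neg]
    have hz' : z.re ≠ 0 ∨ z.im ≠ 0 := by
      by_contra h
      push_neg at h
      exact hz (Zsqrtd.ext h.1 h.2)
    rcases hre with ⟨a1, a2⟩ | ⟨a1, a2⟩ <;> rcases him with ⟨b1, b2⟩ | ⟨b1, b2⟩ <;> omega

/-! ### more w helpers -/

lemma w_add_two_mul (c a : ℕ) : w (a + 2 * c) = 2 ^ c * w a := by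
  induction c with
  | zero => simp
  | succ c ih =>
    have h : a + 2 * (c + 1) = (a + 2 * c) + 2 := by omega
    rw [h, w_add_two, ih, pow_succ]
    ring

lemma pow_half_dvd_w (t : ℕ) : (2:ℤ) ^ (t / 2) ∣ w t := by
  rcases Nat.even_or_odd t with ⟨s, hs⟩ | ⟨s, hs⟩
  · have h : t = 2 * s := by omega
    subst h
    rw [w_twoMul, Nat.mul_div_cancel_left _ (by norm_num)]
    exact Dvd.intro 3 (by ring)
  · subst hs
    have h2 : (2 * s + 1) / 2 = s := by omega
    rw [w_twoMulAdd, h2]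
    exact Dvd.intro 4 (by ring)

lemma w_even (t : ℕ) (ht : 1 ≤ t) : (2:ℤ) ∣ w t := by
  rcases Nat.even_or_odd t with ⟨s, hs⟩ | ⟨s, hs⟩
  · have h : t = 2 * s := by omega
    have hs1 : 1 ≤ s := by omega
    subst h
    rw [w_twoMul]
    have h3 : s = (s - 1) + 1 := by omega
    rw [h3, pow_succ]
    exact ⟨3 * 2 ^ (s-1), by ring⟩
  · subst hs
    rw [w_twoMulAdd]
    exact ⟨2 * 2 ^ s, by ring⟩

/-- from strict bound and divisibility, improve by one step of 2^c -/
lemma dvd_lower_bound (c : ℕ) (X v : ℤ) (hdv : (2:ℤ)^c ∣ v) (hdX : (2:ℤ)^c ∣ X)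
    (h : X - 2 * 2^c < v) : X - 2^c ≤ v := by
  obtain ⟨e, he⟩ := hdv
  obtain ⟨f, hf⟩ := hdX
  have hp : (0:ℤ) < 2^c := pow_pos (by norm_num) c
  subst he hf
  have h2 : f - e < 2 := by nlinarith
  have h3 : f - e ≤ 1 := by omega
  nlinarith

lemma dvd_lower_bound2 (c : ℕ) (X v : ℤ) (hdv : (2:ℤ)^c ∣ v) (hdX : (2:ℤ)^c ∣ X)
    (h : X - 3 * 2^c < v) : X - 2 * 2^c ≤ v := by
  obtain ⟨e, he⟩ := hdv
  obtain ⟨f, hf⟩ := hdX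
  have hp : (0:ℤ) < 2^c := pow_pos (by norm_num) c
  subst he hf
  have h2 : f - e < 3 := by nlinarith
  have h3 : f - e ≤ 2 := by omega
  nlinarith

lemma aux_Q2 (M m μ ν : ℤ) (hM : 0 < M) (hm : 0 ≤ m) (hmM : m ≤ M) (hν : 0 ≤ ν)
    (hR1 : 2 * (μ * M + ν * m) ≤ M ^ 2 + m ^ 2) : 2 * μ ≤ M + m := by
  have h1 : (2 * μ) * M ≤ (M + m) * M := by nlinarith [mul_nonneg hν hm, mul_le_mul_of_nonneg_right hmM hm]
  exact le_of_mul_le_mul_right h1 hM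

lemma aux_QP (M m μ ν : ℤ) (hM : 0 < M) (hm : 0 ≤ m) (hmM : m ≤ M) (hν : 0 ≤ ν) (hνμ : ν ≤ μ)
    (hR1 : 2 * (μ * M + ν * m) ≤ M ^ 2 + m ^ 2) : μ + ν ≤ M := by
  have h1 : (μ + ν) * (M + m) ≤ M * (M + m) := by
    nlinarith [mul_nonneg (sub_nonneg.mpr hνμ) (sub_nonneg.mpr hmM),
      mul_le_mul_of_nonneg_right hmM hm]
  exact le_of_mul_le_mul_right h1 (by linarith)

lemma aux_nt0_B (K D μ : ℤ) (hK : 0 < K) (hD : 1 ≤ D)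
    (hB : K * (4 * D - 2) < μ) (h2μ : 2 * μ ≤ K * D * 2) : False := by
  nlinarith [mul_le_mul_of_nonneg_left hD hK.le]

lemma aux_nt0_C (K D S : ℤ) (hK : 0 < K) (hD : 1 ≤ D)
    (hC : K * (3 * (D * 2) - 3) < S) (hS : S ≤ K * D * 2) : False := by
  nlinarith [mul_le_mul_of_nonneg_left hD hK.le]

lemma aux_m0M (M m μ ν : ℤ) (hM : 0 < M) (hm : 0 ≤ m) (hmM : m ≤ M) (hνμ : ν ≤ μ)
    (hR1 : 2 * (μ * M + ν * m) ≤ M ^ 2 + m ^ 2) (hμν : μ + ν = M) : m = 0 ∨ m = M := by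
  have key : m * (M - m) ≤ 0 := by nlinarith [mul_nonneg (sub_nonneg.mpr hνμ) (sub_nonneg.mpr hmM)]
  by_contra hcm
  push_neg at hcm
  have h1 : 0 < m := lt_of_le_of_ne hm (Ne.symm hcm.1)
  have h2 : m < M := lt_of_le_of_ne hmM hcm.2
  nlinarith

set_option maxHeartbeats 1000000 in
lemma master (j k n : ℕ) (M m μ ν : ℤ)
    (hM : 0 < M) (hm : 0 ≤ m) (hmM : m ≤ M)
    (hμ : 0 < μ) (hν : 0 ≤ ν) (hνμ : ν ≤ μ)
    (hjn : 2 * j ≤ n)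
    (hb1 : M ≤ 2 ^ j * (w (n - 2 * j) - 2))
    (hb2 : M + m ≤ 2 ^ j * (w (n - 2 * j + 1) - 3))
    (hbjM : (2:ℤ) ^ j ∣ M) (hbjm : (2:ℤ) ^ j ∣ m)
    (hbodd : ¬ ((2:ℤ) ^ (j+1) ∣ M ∧ (2:ℤ) ^ (j+1) ∣ m))
    (hkμ : (2:ℤ) ^ k ∣ μ) (hkν : (2:ℤ) ^ k ∣ ν)
    (hR1 : 2 * (μ * M + ν * m) ≤ M ^ 2 + m ^ 2)
    (hr : ¬ (2 * k ≤ n - 1 ∧ μ ≤ 2 ^ k * (w (n - 1 - 2 * k) - 2) ∧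
          μ + ν ≤ 2 ^ k * (w (n - 1 - 2 * k + 1) - 3))) :
    j + 1 ≤ k ∧ 2 * j + 1 ≤ n ∧
    M - μ ≤ 2 ^ j * (w (n - 1 - 2 * j) - 2) ∧
    |ν - m| ≤ 2 ^ j * (w (n - 1 - 2 * j) - 2) ∧
    (M - μ) + |ν - m| ≤ 2 ^ j * (w (n - 1 - 2 * j + 1) - 3) ∧
    μ ≤ M := by
  have hJ : (0:ℤ) < 2 ^ j := pow_pos (by norm_num) j
  have hK : (0:ℤ) < 2 ^ k := pow_pos (by norm_num) k
  have hμk : (2:ℤ) ^ k ≤ μ := Int.le_of_dvd hμ hkμ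
  have hQ2 : 2 * μ ≤ M + m := aux_Q2 M m μ ν hM hm hmM hν hR1
  have hQP : μ + ν ≤ M := aux_QP M m μ ν hM hm hmM hν hνμ hR1
  -- case nt = 0 is contradictory
  rcases Nat.eq_zero_or_pos (n - 2 * j) with hnt0 | hnt1
  · exfalso
    rw [hnt0] at hb1 hb2
    have hw0 : w 0 = 3 := by simp [w]
    have hw1 : w 1 = 4 := by simp [w]
    rw [hw0] at hb1
    rw [hw1] at hb2
    have hMJ : M = 2 ^ j := le_antisymm (by linarith) (Int.le_of_dvd hM hbjM)
    have hm0 : m = 0 := by omega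
    have h2μ : 2 * μ ≤ 2 ^ j := by
      rw [hMJ, hm0] at hQ2; linarith
    by_cases hA : 2 * k ≤ n - 1
    · rcases Nat.eq_zero_or_pos j with hj0 | hj1
      · rw [hj0] at h2μ; norm_num at h2μ; omega
      · have hkj : k + 1 ≤ j := by omega
        have hBC : ¬ (μ ≤ 2 ^ k * (w (n - 1 - 2 * k) - 2) ∧
            μ + ν ≤ 2 ^ k * (w (n - 1 - 2 * k + 1) - 3)) := fun h => hr ⟨hA, h⟩
        obtain ⟨d, hd⟩ : ∃ d, d = j - 1 - k := ⟨j - 1 - k, rfl⟩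
        have hidx1 : n - 1 - 2 * k = 2 * d + 1 := by omega
        have hidx2 : n - 1 - 2 * k + 1 = 2 * (d + 1) := by omega
        have hjkd : j = k + d + 1 := by omega
        have hJeq : (2:ℤ) ^ j = 2 ^ k * 2 ^ d * 2 := by
          rw [hjkd, pow_add, pow_add]; ring
        have hD1 : (1:ℤ) ≤ 2 ^ d := one_le_pow₀ (by norm_num)
        rcases not_and_or.mp hBC with hB | hC
        · push_neg at hB
          rw [hidx1, w_twoMulAdd] at hB
          exact aux_nt0_B (2^k) (2^d) μ hK hD1 hB (by rw [hJeq] at h2μ; linarith)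
        · push_neg at hC
          rw [hidx2, w_twoMul] at hC
          rw [pow_succ] at hC
          exact aux_nt0_C (2^k) (2^d) (μ + ν) hK hD1 hC
            (by rw [hJeq] at h2μ; linarith)
    · have hkj : j ≤ k := by omega
      have hjk2 : (2:ℤ) ^ j ≤ 2 ^ k := pow_le_pow_right₀ (by norm_num) hkj
      linarith
  -- now nt ≥ 1
  obtain ⟨nt, hntdef, hnt1'⟩ : ∃ nt, n - 2 * j = nt ∧ 1 ≤ nt := ⟨n - 2 * j, rfl, hnt1⟩
  rw [hntdef] at hb1 hb2
  have hW2 : w (nt + 1) = 2 * w (nt - 1) := by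
    have h : nt - 1 + 2 = nt + 1 := by omega
    rw [← h, w_add_two]
  -- Step: k ≥ j + 1
  have hjk : j + 1 ≤ k := by
    by_contra hcon
    have hkj : k ≤ j := by omega
    have hA : 2 * k ≤ n - 1 := by omega
    have hBC : ¬ (μ ≤ 2 ^ k * (w (n - 1 - 2 * k) - 2) ∧
        μ + ν ≤ 2 ^ k * (w (n - 1 - 2 * k + 1) - 3)) := fun h => hr ⟨hA, h⟩
    obtain ⟨c, hc⟩ : ∃ c, c = j - k := ⟨j - k, rfl⟩
    have hjkc : j = k + c := by omega
    have hCeq : (2:ℤ) ^ j = 2 ^ k * 2 ^ c := by rw [hjkc, pow_add]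
    rcases not_and_or.mp hBC with hB | hC
    · push_neg at hB
      have hidx : n - 1 - 2 * k = (nt - 1) + 2 * c := by omega
      rw [hidx, w_add_two_mul] at hB
      have hub : 2 * μ ≤ 2 ^ j * (2 * (w (nt - 1)) - 3) := by
        rw [hW2] at hb2; linarith
      have hBexp : (2:ℤ) ^ j * (w (nt - 1)) - 2 * 2 ^ k < μ := by
        have e1 : (2:ℤ) ^ k * (2 ^ c * (w (nt - 1)) - 2) = 2 ^ j * (w (nt - 1)) - 2 * 2 ^ k := by
          rw [hCeq]; ring
        linarith [hB, e1.ge, e1.le]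
      rcases Nat.eq_zero_or_pos c with hc0 | hc1
      · have hkjeq : k = j := by omega
        have hdX : (2:ℤ) ^ k ∣ 2 ^ j * (w (nt - 1)) := by
          rw [hkjeq]; exact Dvd.intro (w (nt - 1)) (by ring)
        have hlow := dvd_lower_bound k (2 ^ j * (w (nt - 1))) μ hkμ hdX hBexp
        rw [hkjeq] at hlow
        linarith
      · have hc2 : (2:ℤ) * 2 ^ k ≤ 2 ^ j := by
          rw [hCeq]
          have h21 : (2:ℤ) ≤ 2 ^ c := by
            calc (2:ℤ) = 2 ^ 1 := (pow_one 2).symm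
            _ ≤ 2 ^ c := pow_le_pow_right₀ (by norm_num) hc1
          nlinarith
        linarith
    · push_neg at hC
      have hidx : n - 1 - 2 * k + 1 = nt + 2 * c := by omega
      rw [hidx, w_add_two_mul] at hC
      have hub : μ + ν ≤ 2 ^ j * ((w nt) - 2) := by linarith
      have hCexp : (2:ℤ) ^ j * (w nt) - 3 * 2 ^ k < μ + ν := by
        have e1 : (2:ℤ) ^ k * (2 ^ c * (w nt) - 3) = 2 ^ j * (w nt) - 3 * 2 ^ k := by
          rw [hCeq]; ring
        linarith [hC, e1.ge, e1.le]
      rcases Nat.eq_zero_or_pos c with hc0 | hc1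
      · have hkjeq : k = j := by omega
        have hdv : (2:ℤ) ^ j ∣ μ + ν := by
          rw [← hkjeq]; exact dvd_add hkμ hkν
        obtain ⟨t, ht⟩ := hdv
        have hKJ : (2:ℤ) ^ k = 2 ^ j := by rw [hkjeq]
        have ht1 : (w nt) - 3 < t := by
          have h1 : (2:ℤ) ^ j * ((w nt) - 3) < 2 ^ j * t := by
            rw [← ht]
            linarith [hCexp, hKJ.le, hKJ.ge]
          exact (mul_lt_mul_iff_right₀ hJ).mp h1
        have ht2 : t ≤ (w nt) - 2 := by
          have h1 : (2:ℤ) ^ j * t ≤ 2 ^ j * ((w nt) - 2) := by rw [← ht]; exact hub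
          exact (mul_le_mul_iff_right₀ hJ).mp h1
        have hteq : t = (w nt) - 2 := by omega
        have hμν : μ + ν = 2 ^ j * ((w nt) - 2) := by rw [ht, hteq]
        have hMeq : M = 2 ^ j * ((w nt) - 2) := le_antisymm (by linarith) (by linarith)
        have hμνM : μ + ν = M := by rw [hMeq, hμν]
        rcases aux_m0M M m μ ν hM hm hmM hνμ hR1 hμνM with hm0 | hmMeq
        · have h2μM : 2 * μ ≤ M := by rw [hm0] at hQ2; linarith
          have hμνeq : μ = ν := by omega
          have hM2μ : M = 2 * μ := by omega
          apply hbodd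
          constructor
          · obtain ⟨e, he⟩ := hkμ
            rw [hM2μ, he, hkjeq, pow_succ]
            exact ⟨e, by ring⟩
          · rw [hm0]; exact dvd_zero _
        · apply hbodd
          obtain ⟨u, hu⟩ : (2:ℤ) ∣ (w nt) := w_even nt (show 1 ≤ nt by omega)
          have hdM : (2:ℤ) ^ (j+1) ∣ M := by
            rw [hMeq, hu, pow_succ]
            exact ⟨u - 1, by ring⟩
          exact ⟨hdM, hmMeq ▸ hdM⟩
      · have hc2 : (2:ℤ) * 2 ^ k ≤ 2 ^ j := by
          rw [hCeq]
          have h21 : (2:ℤ) ≤ 2 ^ c := by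
            calc (2:ℤ) = 2 ^ 1 := (pow_one 2).symm
            _ ≤ 2 ^ c := pow_le_pow_right₀ (by norm_num) hc1
          nlinarith
        linarith
  -- Step: the claims
  obtain ⟨κ, hκ1, hkeq⟩ : ∃ κ, 1 ≤ κ ∧ k = j + κ := ⟨k - j, by omega, by omega⟩
  have hKeq : (2:ℤ) ^ k = 2 ^ j * 2 ^ κ := by rw [hkeq, pow_add]
  have hclaims : 2 ^ j * ((w nt) - (w (nt - 1))) ≤ μ ∧ 2 ^ j * ((w (nt + 1)) - (w nt)) ≤ μ + ν := by
    by_cases hA : 2 * k ≤ n - 1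
    · have hκnt : 2 * κ ≤ nt - 1 := by omega
      have hBC : ¬ (μ ≤ 2 ^ k * (w (n - 1 - 2 * k) - 2) ∧
          μ + ν ≤ 2 ^ k * (w (n - 1 - 2 * k + 1) - 3)) := fun h => hr ⟨hA, h⟩
      rcases not_and_or.mp hBC with hB | hC
      · push_neg at hB
        have hidx : nt - 1 - 2 * κ + 2 * κ = nt - 1 := by omega
        have hidx2 : n - 1 - 2 * k = nt - 1 - 2 * κ := by omega
        have hWeq : (2:ℤ) ^ κ * w (nt - 1 - 2 * κ) = (w (nt - 1)) := by
          rw [← w_add_two_mul κ (nt - 1 - 2 * κ), hidx]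
        have hdW1 : (2:ℤ) ^ κ ∣ (w (nt - 1)) := Dvd.intro _ hWeq
        have hdX : (2:ℤ) ^ k ∣ 2 ^ j * (w (nt - 1)) := by
          rw [hKeq]
          exact mul_dvd_mul_left _ hdW1
        have hBs : (2:ℤ) ^ j * (w (nt - 1)) - 2 * 2 ^ k < μ := by
          rw [hidx2] at hB
          have e1 : (2:ℤ) ^ k * (w (nt - 1 - 2 * κ) - 2) = 2 ^ j * (w (nt - 1)) - 2 * 2 ^ k := by
            rw [hKeq, ← hWeq]; ring
          linarith [hB, e1.ge, e1.le]
        have hlow := dvd_lower_bound k (2 ^ j * (w (nt - 1))) μ hkμ hdX hBs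
        rcases Nat.even_or_odd nt with ⟨s, hsa⟩ | ⟨s, hsa⟩
        <;> [(have hs1 : 1 ≤ s := by omega); skip]
        <;> [(have hse : nt = 2 * s := by omega); (have hso : nt = 2 * s + 1 := by omega)]
        · have hW1v : (w (nt - 1)) = 4 * 2 ^ (s - 1) := by
            rw [show nt - 1 = 2 * (s - 1) + 1 by omega, w_twoMulAdd]
          have hW0v : (w nt) = 6 * 2 ^ (s - 1) := by
            rw [show nt = 2 * (s - 1) + 2 by omega, w_add_two, w_twoMul]; ring
          have hW2v : (w (nt + 1)) = 8 * 2 ^ (s - 1) := by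
            rw [show nt + 1 = 2 * (s - 1) + 1 + 2 by omega, w_add_two, w_twoMulAdd]
            ring
          have hκs : (2:ℤ) ^ κ ≤ 2 ^ (s - 1) := pow_le_pow_right₀ (by norm_num) (show κ ≤ s - 1 by omega)
          have hE1 : (2:ℤ) ^ k ≤ 2 ^ j * 2 ^ (s - 1) := by
            rw [hKeq]; exact mul_le_mul_of_nonneg_left hκs hJ.le
          have hE0 : (0:ℤ) < 2 ^ j * 2 ^ (s - 1) :=
            mul_pos hJ (pow_pos (by norm_num) _)
          rw [hW1v] at hlow
          rw [hW1v, hW0v, hW2v]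
          constructor <;> linarith [hlow, hE1, hE0, hν]
        · have hW1v : (w (nt - 1)) = 3 * 2 ^ s := by
            rw [show nt - 1 = 2 * s by omega, w_twoMul]
          have hW0v : (w nt) = 4 * 2 ^ s := by
            rw [hso, w_twoMulAdd]
          have hW2v : (w (nt + 1)) = 6 * 2 ^ s := by
            rw [show nt + 1 = 2 * s + 2 by omega, w_add_two, w_twoMul]; ring
          have hκs : (2:ℤ) ^ κ ≤ 2 ^ s := pow_le_pow_right₀ (by norm_num) (show κ ≤ s by omega)
          have hE1 : (2:ℤ) ^ k ≤ 2 ^ j * 2 ^ s := by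
            rw [hKeq]; exact mul_le_mul_of_nonneg_left hκs hJ.le
          have hE0 : (0:ℤ) < 2 ^ j * 2 ^ s :=
            mul_pos hJ (pow_pos (by norm_num) _)
          rw [hW1v] at hlow
          rw [hW1v, hW0v, hW2v]
          constructor <;> linarith [hlow, hE1, hE0, hν]
      · push_neg at hC
        have hκnt2 : 2 * κ ≤ nt := by omega
        have hidx : nt - 2 * κ + 2 * κ = nt := by omega
        have hidx2 : n - 1 - 2 * k + 1 = nt - 2 * κ := by omega
        have hWeq : (2:ℤ) ^ κ * w (nt - 2 * κ) = (w nt) := by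
          rw [← w_add_two_mul κ (nt - 2 * κ), hidx]
        have hdW0 : (2:ℤ) ^ κ ∣ (w nt) := Dvd.intro _ hWeq
        have hdX : (2:ℤ) ^ k ∣ 2 ^ j * (w nt) := by
          rw [hKeq]
          exact mul_dvd_mul_left _ hdW0
        have hCs : (2:ℤ) ^ j * (w nt) - 3 * 2 ^ k < μ + ν := by
          rw [hidx2] at hC
          have e1 : (2:ℤ) ^ k * (w (nt - 2 * κ) - 3) = 2 ^ j * (w nt) - 3 * 2 ^ k := by
            rw [hKeq, ← hWeq]; ring
          linarith [hC, e1.ge, e1.le]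
        have hlow := dvd_lower_bound2 k (2 ^ j * (w nt)) (μ + ν) (dvd_add hkμ hkν) hdX hCs
        rcases Nat.even_or_odd nt with ⟨s, hsa⟩ | ⟨s, hsa⟩
        <;> [(have hs1 : 1 ≤ s := by omega); skip]
        <;> [(have hse : nt = 2 * s := by omega); (have hso : nt = 2 * s + 1 := by omega)]
        · have hW1v : (w (nt - 1)) = 4 * 2 ^ (s - 1) := by
            rw [show nt - 1 = 2 * (s - 1) + 1 by omega, w_twoMulAdd]
          have hW0v : (w nt) = 6 * 2 ^ (s - 1) := by
            rw [show nt = 2 * (s - 1) + 2 by omega, w_add_two, w_twoMul]; ring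
          have hW2v : (w (nt + 1)) = 8 * 2 ^ (s - 1) := by
            rw [show nt + 1 = 2 * (s - 1) + 1 + 2 by omega, w_add_two, w_twoMulAdd]
            ring
          have hκs : (2:ℤ) ^ κ ≤ 2 ^ (s - 1) := pow_le_pow_right₀ (by norm_num) (show κ ≤ s - 1 by omega)
          have hE1 : (2:ℤ) ^ k ≤ 2 ^ j * 2 ^ (s - 1) := by
            rw [hKeq]; exact mul_le_mul_of_nonneg_left hκs hJ.le
          have hE0 : (0:ℤ) < 2 ^ j * 2 ^ (s - 1) :=
            mul_pos hJ (pow_pos (by norm_num) _)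
          rw [hW0v] at hlow
          rw [hW1v, hW0v, hW2v]
          constructor <;> linarith [hlow, hE1, hE0, hν, hνμ]
        · have hW1v : (w (nt - 1)) = 3 * 2 ^ s := by
            rw [show nt - 1 = 2 * s by omega, w_twoMul]
          have hW0v : (w nt) = 4 * 2 ^ s := by
            rw [hso, w_twoMulAdd]
          have hW2v : (w (nt + 1)) = 6 * 2 ^ s := by
            rw [show nt + 1 = 2 * s + 2 by omega, w_add_two, w_twoMul]; ring
          have hκs : (2:ℤ) ^ κ ≤ 2 ^ s := pow_le_pow_right₀ (by norm_num) (show κ ≤ s by omega)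
          have hE1 : (2:ℤ) ^ k ≤ 2 ^ j * 2 ^ s := by
            rw [hKeq]; exact mul_le_mul_of_nonneg_left hκs hJ.le
          have hE0 : (0:ℤ) < 2 ^ j * 2 ^ s :=
            mul_pos hJ (pow_pos (by norm_num) _)
          rw [hW0v] at hlow
          rw [hW1v, hW0v, hW2v]
          constructor <;> linarith [hlow, hE1, hE0, hν, hνμ]
    · have hκnt : nt ≤ 2 * κ := by omega
      rcases Nat.even_or_odd nt with ⟨s, hsa⟩ | ⟨s, hsa⟩
      <;> [(have hs1 : 1 ≤ s := by omega); skip]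
      <;> [(have hse : nt = 2 * s := by omega); (have hso : nt = 2 * s + 1 := by omega)]
      · have hW1v : (w (nt - 1)) = 4 * 2 ^ (s - 1) := by
          rw [show nt - 1 = 2 * (s - 1) + 1 by omega, w_twoMulAdd]
        have hW0v : (w nt) = 6 * 2 ^ (s - 1) := by
          rw [show nt = 2 * (s - 1) + 2 by omega, w_add_two, w_twoMul]; ring
        have hW2v : (w (nt + 1)) = 8 * 2 ^ (s - 1) := by
          rw [show nt + 1 = 2 * (s - 1) + 1 + 2 by omega, w_add_two, w_twoMulAdd]
          ring
        have hκs : (2:ℤ) ^ s ≤ 2 ^ κ := pow_le_pow_right₀ (by norm_num) (show s ≤ κ by omega)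
        have h2s : (2:ℤ) ^ s = 2 * 2 ^ (s - 1) := by
          conv_lhs => rw [show s = s - 1 + 1 by omega]
          rw [pow_succ]; ring
        have hE1 : (2:ℤ) ^ j * (2 * 2 ^ (s - 1)) ≤ 2 ^ k := by
          rw [hKeq, ← h2s]
          exact mul_le_mul_of_nonneg_left hκs hJ.le
        rw [hW1v, hW0v, hW2v]
        constructor <;> linarith [hμk, hE1, hν]
      · have hW1v : (w (nt - 1)) = 3 * 2 ^ s := by
          rw [show nt - 1 = 2 * s by omega, w_twoMul]
        have hW0v : (w nt) = 4 * 2 ^ s := by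
          rw [hso, w_twoMulAdd]
        have hW2v : (w (nt + 1)) = 6 * 2 ^ s := by
          rw [show nt + 1 = 2 * s + 2 by omega, w_add_two, w_twoMul]; ring
        have hκs : (2:ℤ) ^ (s + 1) ≤ 2 ^ κ := pow_le_pow_right₀ (by norm_num) (show s + 1 ≤ κ by omega)
        have h2s : (2:ℤ) ^ (s + 1) = 2 * 2 ^ s := by rw [pow_succ]; ring
        have hE1 : (2:ℤ) ^ j * (2 * 2 ^ s) ≤ 2 ^ k := by
          rw [hKeq, ← h2s]
          exact mul_le_mul_of_nonneg_left hκs hJ.le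
        rw [hW1v, hW0v, hW2v]
        constructor <;> linarith [hμk, hE1, hν]
  obtain ⟨hcl1, hcl2⟩ := hclaims
  -- final inequalities
  have hi1 : n - 1 - 2 * j = nt - 1 := by omega
  have hi2 : n - 1 - 2 * j + 1 = nt := by omega
  rw [hi2, hi1]
  have hjμ : (2:ℤ) ^ j ∣ μ := dvd_trans (pow_dvd_pow 2 (show j ≤ k by omega)) hkμ
  have hub2 : M + m ≤ 2 ^ j * (2 * (w (nt - 1)) - 3) := by
    rw [hW2] at hb2; linarith
  have hmB : m ≤ 2 ^ j * ((w (nt - 1)) - 2) := by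
    obtain ⟨p, hp⟩ := hbjm
    rw [hp]
    rw [hp] at hub2 hm hmM
    have h1 : (2:ℤ) ^ j * (2 * p) ≤ 2 ^ j * (2 * (w (nt - 1)) - 3) := by linarith
    have hple : 2 * p ≤ 2 * (w (nt - 1)) - 3 := (mul_le_mul_iff_right₀ hJ).mp h1
    have h2 : p ≤ (w (nt - 1)) - 2 := by omega
    exact mul_le_mul_of_nonneg_left h2 hJ.le
  have hμB : μ ≤ 2 ^ j * ((w (nt - 1)) - 2) := by
    obtain ⟨q, hq⟩ := hjμ
    rw [hq]
    rw [hq] at hQ2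
    have h1 : (2:ℤ) ^ j * (2 * q) ≤ 2 ^ j * (2 * (w (nt - 1)) - 3) := by linarith
    have hqle : 2 * q ≤ 2 * (w (nt - 1)) - 3 := (mul_le_mul_iff_right₀ hJ).mp h1
    have h2 : q ≤ (w (nt - 1)) - 2 := by omega
    exact mul_le_mul_of_nonneg_left h2 hJ.le
  have hνB : ν ≤ 2 ^ j * ((w (nt - 1)) - 2) := le_trans hνμ hμB
  have hG2re : M - μ ≤ 2 ^ j * ((w (nt - 1)) - 2) := by linarith [hb1, hcl1]
  have hG2im : |ν - m| ≤ 2 ^ j * ((w (nt - 1)) - 2) := by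
    rw [abs_le]
    constructor <;> linarith [hmB, hνB, hm, hν]
  refine ⟨hjk, by omega, hG2re, hG2im, ?_, by linarith⟩
  by_cases hνm : ν ≤ m
  · have habs : |ν - m| = m - ν := by rw [abs_of_nonpos (by linarith)]; ring
    rw [habs]
    linarith [hb2, hcl2]
  · push_neg at hνm
    have habs : |ν - m| = ν - m := by rw [abs_of_nonneg (by linarith)]
    rw [habs]
    rcases eq_or_lt_of_le hm with hm0 | hmpos
    · rcases eq_or_lt_of_le hνμ with hνeq | hνlt
      · obtain ⟨cM, hcM⟩ := hbjM
        have hcModd : ¬ (2:ℤ) ∣ cM := by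
          rintro ⟨u, hu⟩
          apply hbodd
          constructor
          · rw [hcM, hu, pow_succ]; exact ⟨u, by ring⟩
          · rw [← hm0]; exact dvd_zero _
        obtain ⟨u, hu⟩ : (2:ℤ) ∣ (w nt) := w_even nt (show 1 ≤ nt by omega)
        have hcMle : cM ≤ (w nt) - 2 := by
          rw [hcM] at hb1
          exact (mul_le_mul_iff_right₀ hJ).mp hb1
        have hcMne : cM ≠ (w nt) - 2 := by
          intro hcc
          apply hcModd
          rw [hcc, hu]
          exact ⟨u - 1, by ring⟩
        have h3 : cM ≤ (w nt) - 3 := by omega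
        have h4 : M ≤ 2 ^ j * ((w nt) - 3) := by
          rw [hcM]
          exact mul_le_mul_of_nonneg_left h3 hJ.le
        linarith [hνeq, hm0.symm, h4]
      · have hd : (2:ℤ) ^ k ∣ μ - ν := dvd_sub hkμ hkν
        have hle : (2:ℤ) ^ k ≤ μ - ν := Int.le_of_dvd (by linarith) hd
        have h2j : (2:ℤ) * 2 ^ j ≤ 2 ^ k := by
          calc (2:ℤ) * 2 ^ j = 2 ^ (j + 1) := by rw [pow_succ]; ring
          _ ≤ 2 ^ k := pow_le_pow_right₀ (by norm_num) hjk
        linarith [hb1, hle, h2j, hm0.symm]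
    · have hmj : (2:ℤ) ^ j ≤ m := Int.le_of_dvd hmpos hbjm
      linarith [hb1, hmj, hνμ]

/-! ### assembly -/

lemma l1_eq (z : GaussianInt) : l1 z = linf z + mm z := by
  simp only [l1, linf, mm]
  omega

lemma mm_nonneg (z : GaussianInt) : 0 ≤ mm z := le_min (abs_nonneg _) (abs_nonneg _)

lemma mm_le_linf (z : GaussianInt) : mm z ≤ linf z := min_le_max

lemma linf_pos (z : GaussianInt) (hz : z ≠ 0) : 0 < linf z :=
  lt_of_lt_of_le (pow_pos (by norm_num) _) (two_pow_le_linf z hz)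

lemma v2_dvd_linf (z : GaussianInt) : (2:ℤ) ^ (v2 z) ∣ linf z := by
  have h1 := (dvd_abs _ _).mpr (v2_dvd_re z)
  have h2 := (dvd_abs _ _).mpr (v2_dvd_im z)
  rcases le_total |z.re| |z.im| with h | h
  · rw [linf, max_eq_right h]; exact h2
  · rw [linf, max_eq_left h]; exact h1

lemma v2_dvd_mm (z : GaussianInt) : (2:ℤ) ^ (v2 z) ∣ mm z := by
  have h1 := (dvd_abs _ _).mpr (v2_dvd_re z)
  have h2 := (dvd_abs _ _).mpr (v2_dvd_im z)
  rcases le_total |z.re| |z.im| with h | h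
  · rw [mm, min_eq_left h]; exact h1
  · rw [mm, min_eq_right h]; exact h2

lemma int_pow2_dvd_natAbs (c : ℕ) (x : ℤ) (h : (2:ℤ) ^ c ∣ |x|) : 2 ^ c ∣ x.natAbs := by
  rw [Int.abs_eq_natAbs] at h
  exact_mod_cast h

lemma natAbs_pow2_dvd (c : ℕ) (x : ℤ) (h : 2 ^ c ∣ x.natAbs) : (2:ℤ) ^ c ∣ x := by
  have h2 : ((2 ^ c : ℕ) : ℤ) ∣ ((x.natAbs : ℕ) : ℤ) := by exact_mod_cast h
  rw [← Int.abs_eq_natAbs] at h2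
  push_cast at h2
  exact (dvd_abs _ _).mp h2

lemma gcd_ne_zero (z : GaussianInt) (hz : z ≠ 0) : Int.gcd z.re z.im ≠ 0 := by
  intro h
  obtain ⟨h1, h2⟩ := Int.gcd_eq_zero_iff.mp h
  exact hz (Zsqrtd.ext h1 h2)

lemma v2_exact (z : GaussianInt) (hz : z ≠ 0) :
    ¬ ((2:ℤ) ^ (v2 z + 1) ∣ linf z ∧ (2:ℤ) ^ (v2 z + 1) ∣ mm z) := by
  rintro ⟨h1, h2⟩
  have hre : (2:ℤ) ^ (v2 z + 1) ∣ |z.re| ∧ (2:ℤ) ^ (v2 z + 1) ∣ |z.im| := by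
    rcases le_total |z.re| |z.im| with h | h
    · rw [linf, max_eq_right h] at h1
      rw [mm, min_eq_left h] at h2
      exact ⟨(dvd_abs _ _).mpr ((dvd_abs _ _).mp h2), (dvd_abs _ _).mpr ((dvd_abs _ _).mp h1)⟩
    · rw [linf, max_eq_left h] at h1
      rw [mm, min_eq_right h] at h2
      exact ⟨(dvd_abs _ _).mpr ((dvd_abs _ _).mp h1), (dvd_abs _ _).mpr ((dvd_abs _ _).mp h2)⟩
  have hgcd : 2 ^ (v2 z + 1) ∣ Int.gcd z.re z.im :=
    Nat.dvd_gcd (int_pow2_dvd_natAbs _ _ hre.1) (int_pow2_dvd_natAbs _ _ hre.2)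
  have := (padicValNat_dvd_iff_le (gcd_ne_zero z hz)).mp hgcd
  unfold v2 at this
  omega

lemma v2_eq_of (z : GaussianInt) (hz : z ≠ 0) (j : ℕ)
    (h1 : (2:ℤ) ^ j ∣ z.re) (h2 : (2:ℤ) ^ j ∣ z.im)
    (h3 : ¬ ((2:ℤ) ^ (j + 1) ∣ z.re ∧ (2:ℤ) ^ (j + 1) ∣ z.im)) : v2 z = j := by
  have hg0 := gcd_ne_zero z hz
  have hle : j ≤ padicValNat 2 (Int.gcd z.re z.im) := by
    have hgcd : 2 ^ j ∣ Int.gcd z.re z.im :=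
      Nat.dvd_gcd (int_pow2_dvd_natAbs _ _ ((dvd_abs _ _).mpr h1))
        (int_pow2_dvd_natAbs _ _ ((dvd_abs _ _).mpr h2))
    exact (padicValNat_dvd_iff_le hg0).mp hgcd
  have hlt : padicValNat 2 (Int.gcd z.re z.im) < j + 1 := by
    by_contra hcon
    push_neg at hcon
    have hd : 2 ^ (j + 1) ∣ Int.gcd z.re z.im :=
      dvd_trans (pow_dvd_pow 2 hcon) pow_padicValNat_dvd
    apply h3
    have hre := dvd_trans (Int.natCast_dvd_natCast.mpr hd) (Int.gcd_dvd_left _ _)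
    have him := dvd_trans (Int.natCast_dvd_natCast.mpr hd) (Int.gcd_dvd_right _ _)
    push_cast at hre him
    exact ⟨hre, him⟩
  unfold v2
  omega

lemma mul_star_re (z t : GaussianInt) :
    (z * star t).re = z.re * t.re + z.im * t.im := by
  simp [Zsqrtd.re_mul, Zsqrtd.re_star, Zsqrtd.im_star]
  try ring

lemma mul_star_im (z t : GaussianInt) :
    (z * star t).im = z.im * t.re - z.re * t.im := by
  simp [Zsqrtd.im_mul, Zsqrtd.re_star, Zsqrtd.im_star]
  try ring

lemma Nm_eq (z : GaussianInt) : Nm z = (linf z) ^ 2 + (mm z) ^ 2 := by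
  have h1 : Nm z = |z.re| ^ 2 + |z.im| ^ 2 := by
    simp [Nm, sq_abs]
  rcases le_total |z.re| |z.im| with h | h
  · rw [h1, linf, mm, max_eq_right h, min_eq_left h]; try ring
  · rw [h1, linf, mm, max_eq_left h, min_eq_right h]; try ring

lemma abs_sub_eq (A B q p : ℤ) (h1 : |A| = q) (h2 : |B| = p) (h3 : 0 ≤ B * A) :
    |A - B| = |q - p| := by
  rcases le_or_gt 0 A with hA | hA
  · rcases le_or_gt 0 B with hB | hB
    · rw [abs_of_nonneg hA] at h1
      rw [abs_of_nonneg hB] at h2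
      rw [← h1, ← h2]
    · have hA0 : A = 0 := by nlinarith
      subst hA0
      rw [abs_zero] at h1
      have hp : 0 ≤ p := h2 ▸ abs_nonneg B
      rw [zero_sub, abs_neg, h2, ← h1, zero_sub, abs_neg]
      exact (abs_of_nonneg hp).symm
  · rcases le_or_gt 0 B with hB | hB
    · have hB0 : B = 0 := by nlinarith
      subst hB0
      rw [abs_zero] at h2
      have hq : 0 ≤ q := h1 ▸ abs_nonneg A
      rw [sub_zero, h1, ← h2, sub_zero]
      exact (abs_of_nonneg hq).symm
    · rw [abs_of_neg hA] at h1
      rw [abs_of_neg hB] at h2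
      rw [← h1, ← h2]
      have heq : -A - -B = -(A - B) := by ring
      rw [heq, abs_neg]

set_option maxHeartbeats 2000000 in
theorem stmt16 (a b r : GaussianInt) (n : ℕ) (ha : a ≠ 0) (hb : b ≠ 0) (hr : r = gr a b)
    (hr0 : r ≠ 0) (hphi : phi r ≥ phi b) (hn : phi b = n)
    (him : (uz b * b).im * (uz r * r).im ≥ 0) :
    phi (r - uz b * star (uz r) * b) < phi b := by
  obtain ⟨hxre, hxim⟩ := uz_spec b hb
  obtain ⟨hyre, hyim⟩ := uz_spec r hr0
  have hM : 0 < linf b := linf_pos b hb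
  have hμ : 0 < linf r := linf_pos r hr0
  have hm : 0 ≤ mm b := mm_nonneg b
  have hν : 0 ≤ mm r := mm_nonneg r
  have hmM : mm b ≤ linf b := mm_le_linf b
  have hνμ : mm r ≤ linf r := mm_le_linf r
  -- the key R1 inequality
  have hR1 : 2 * (linf r * linf b + mm r * mm b) ≤ (linf b) ^ 2 + (mm b) ^ 2 := by
    obtain ⟨hg1, hg2⟩ := gr_bounds a b hb
    rw [← hr] at hg1 hg2
    have hu : IsU (uz r * star (uz b)) := isU_mul _ _ (isU_uz r) (isU_star _ (isU_uz b))
    have hyx : (uz r * r) * star (uz b * b) = (uz r * star (uz b)) * (r * star b) := by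
      rw [star_mul']
      ring
    have habs := isU_abs (uz r * star (uz b)) (r * star b) hu
    have htre : (r * star b).re = r.re * b.re + r.im * b.im := mul_star_re r b
    have htim : (r * star b).im = r.im * b.re - r.re * b.im := mul_star_im r b
    have hbnd : 2 * |((uz r * r) * star (uz b * b)).re| ≤ Nm b := by
      rw [hyx]
      rcases habs with ⟨h1, _⟩ | ⟨h1, _⟩
      · rw [h1, htre]; exact hg1
      · rw [h1, htim]; exact hg2
    have hcomp : ((uz r * r) * star (uz b * b)).re
        = linf r * linf b + mm r * mm b := by
      rw [mul_star_re, hxre, hyre]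
      congr 1
      have hprod : 0 ≤ (uz r * r).im * (uz b * b).im := by
        rw [mul_comm ((uz r * r).im) ((uz b * b).im)]; exact him
      have h1 : |(uz r * r).im * (uz b * b).im| = mm r * mm b := by
        rw [abs_mul, hyim, hxim]
      rw [← h1, abs_of_nonneg hprod]
    rw [hcomp] at hbnd
    rw [Nm_eq b] at hbnd
    have hnn : 0 ≤ linf r * linf b + mm r * mm b := by positivity
    rwa [abs_of_nonneg hnn] at hbnd
  -- phi b = n facts
  obtain ⟨hjn, hb1, hb2⟩ := (phi_le_iff b n).mp (le_of_eq hn)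
  rw [l1_eq b] at hb2
  -- n ≥ 1
  rcases Nat.eq_zero_or_pos n with hn0 | hn1
  · exfalso
    subst hn0
    have hj0 : v2 b = 0 := by omega
    rw [hj0] at hb1 hb2
    norm_num at hb1 hb2
    have hw0 : w 0 = 3 := by simp [w]
    have hw1 : w 1 = 4 := by simp [w]
    rw [hw0] at hb1
    rw [hw1] at hb2
    nlinarith [hb1, hb2, hR1, hμ, hν, hm, hM, mul_le_mul_of_nonneg_left hmM hν]
  -- phi r ≥ n facts
  have hrneg : ¬ phi r ≤ n - 1 := by omega
  have hrC : ¬ (2 * v2 r ≤ n - 1 ∧ linf r ≤ 2 ^ (v2 r) * (w (n - 1 - 2 * v2 r) - 2) ∧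
      l1 r ≤ 2 ^ (v2 r) * (w (n - 1 - 2 * v2 r + 1) - 3)) := by
    rw [← phi_le_iff]
    exact hrneg
  rw [l1_eq r] at hrC
  -- apply master
  obtain ⟨hjk, hn2j, hG2re, hG2im, hG3, hμM⟩ :=
    master (v2 b) (v2 r) n (linf b) (mm b) (linf r) (mm r)
      hM hm hmM hμ hν hνμ hjn hb1 hb2
      (v2_dvd_linf b) (v2_dvd_mm b) (v2_exact b hb)
      (v2_dvd_linf r) (v2_dvd_mm r) hR1 hrC
  -- the difference z' = y - x
  have hζeq : uz r * (r - uz b * star (uz r) * b) = (uz r * r) - (uz b * b) := by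
    have h1 : uz r * star (uz r) = 1 := isU_mul_star _ (isU_uz r)
    calc uz r * (r - uz b * star (uz r) * b)
        = uz r * r - (uz r * star (uz r)) * (uz b * b) := by ring
      _ = (uz r * r) - (uz b * b) := by rw [h1, one_mul]
  have hphiζ : phi (r - uz b * star (uz r) * b) = phi ((uz r * r) - (uz b * b)) := by
    rw [← hζeq]
    exact (isU_phi _ _ (isU_uz r)).symm
  set y := uz r * r with hy
  set x := uz b * b with hx
  -- components of y - x
  have hre : (y - x).re = linf r - linf b := by
    rw [Zsqrtd.re_sub, hyre, hxre]
  have him2 : (y - x).im = y.im - x.im := Zsqrtd.im_sub _ _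
  have habsre : |(y - x).re| = linf b - linf r := by
    rw [hre, abs_of_nonpos (by linarith), neg_sub]
  have habsim : |(y - x).im| = |mm r - mm b| := by
    rw [him2]
    exact abs_sub_eq y.im x.im (mm r) (mm b) hyim hxim him
  -- y - x ≠ 0
  have hne : y - x ≠ 0 := by
    intro h0
    have h1 : (y - x).re = 0 := by rw [h0]; rfl
    have h2 : (y - x).im = 0 := by rw [h0]; rfl
    rw [hre] at h1
    have h3 : mm r = mm b := by
      rw [him2] at h2
      have : y.im = x.im := by linarith [h2]
      rw [← hyim, ← hxim, this]
    nlinarith [hR1, h1, h3, hM, hm]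
  -- v2 (y - x) = v2 b
  have hjk' : (2:ℤ) ^ (v2 b) ∣ 2 ^ (v2 r) := pow_dvd_pow 2 (by omega)
  have hjk1 : (2:ℤ) ^ (v2 b + 1) ∣ 2 ^ (v2 r) := pow_dvd_pow 2 (by omega)
  have hyredvd : (2:ℤ) ^ (v2 r) ∣ y.re := by rw [hyre]; exact v2_dvd_linf r
  have hyimdvd : (2:ℤ) ^ (v2 r) ∣ y.im := by
    have := v2_dvd_mm r
    rw [← hyim] at this
    exact (dvd_abs _ _).mp this
  have hxredvd : (2:ℤ) ^ (v2 b) ∣ x.re := by rw [hxre]; exact v2_dvd_linf b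
  have hximdvd : (2:ℤ) ^ (v2 b) ∣ x.im := by
    have := v2_dvd_mm b
    rw [← hxim] at this
    exact (dvd_abs _ _).mp this
  have hv2yx : v2 (y - x) = v2 b := by
    apply v2_eq_of _ hne
    · rw [Zsqrtd.re_sub]
      exact dvd_sub (dvd_trans hjk' hyredvd) hxredvd
    · rw [him2]
      exact dvd_sub (dvd_trans hjk' hyimdvd) hximdvd
    · rintro ⟨hd1, hd2⟩
      apply v2_exact b hb
      have hxre1 : (2:ℤ) ^ (v2 b + 1) ∣ x.re := by
        have : x.re = y.re - (y - x).re := by rw [Zsqrtd.re_sub]; ring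
        rw [this]
        exact dvd_sub (dvd_trans hjk1 hyredvd) hd1
      have hxim1 : (2:ℤ) ^ (v2 b + 1) ∣ x.im := by
        have : x.im = y.im - (y - x).im := by rw [him2]; ring
        rw [this]
        exact dvd_sub (dvd_trans hjk1 hyimdvd) hd2
      constructor
      · rw [← hxre]; exact hxre1
      · rw [← hxim]; exact (dvd_abs _ _).mpr hxim1
  -- conclude
  rw [hphiζ, hn]
  have hle : phi (y - x) ≤ n - 1 := by
    apply (phi_le_iff (y - x) (n - 1)).mpr
    rw [hv2yx]
    refine ⟨by omega, ?_, ?_⟩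
    · have hlinf : linf (y - x) = max (linf b - linf r) (|mm r - mm b|) := by
        rw [linf, habsre, habsim]
      rw [hlinf]
      have hidx : n - 1 - 2 * v2 b = n - 1 - 2 * v2 b := rfl
      exact max_le (by exact hG2re) (by exact hG2im)
    · have hl1 : l1 (y - x) = (linf b - linf r) + |mm r - mm b| := by
        rw [l1, habsre, habsim]
      rw [hl1]
      exact hG3
  omega
end
end

section
/- Suppose r is the nonzero Gauss remainder of nonzero a, b ∈ ℤ[i] with φ(r) ≥ φ(b) = n and Im(u_b·b)·Im(u_r·r) < 0. Then u_b·b - u_r·r has real part ℓ∞(b) - ℓ∞(r) and imaginary part ±(m(b) + m(r)), and u_b·b + s(r)·i·u_r·r has real part ℓ∞(b) - m(r) and imaginary part ±(m(b) - ℓ∞(r)), where m(z) = min(|Re z|,|Im z|), ℓ∞(z) = max(|Re z|,|Im z|), and s(r) = sgn(Im(u_r·r)). -/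
open GaussianInt

noncomputable section

lemma key_uz (z : GaussianInt) : (uz z * z).re = linf z ∧ |(uz z * z).im| = mm z := by
  obtain ⟨x, y⟩ := z
  simp only [uz, linf, mm, Ii]
  split_ifs with h1 h2 h3 h4 h5 h6 h7 <;>
    simp only [Zsqrtd.re_mul, Zsqrtd.im_mul, Zsqrtd.re_neg, Zsqrtd.im_neg, Zsqrtd.re_one,
      Zsqrtd.im_one] at * <;>
    constructor <;>
    simp only [Int.abs_eq_natAbs] at * <;> omega

theorem stmt17 (a b r : GaussianInt) (n : ℕ) (ha : a ≠ 0) (hb : b ≠ 0) (hr : r = gr a b)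
    (hr0 : r ≠ 0) (hphi : phi r ≥ phi b) (hn : phi b = n)
    (him : (uz b * b).im * (uz r * r).im < 0) :
    ((uz b * b - uz r * r).re = linf b - linf r ∧
      ((uz b * b - uz r * r).im = mm b + mm r ∨ (uz b * b - uz r * r).im = -(mm b + mm r))) ∧
    ((uz b * b + sfun r • (Ii * (uz r * r))).re = linf b - mm r ∧
      ((uz b * b + sfun r • (Ii * (uz r * r))).im = mm b - linf r ∨
        (uz b * b + sfun r • (Ii * (uz r * r))).im = -(mm b - linf r))) := by
  obtain ⟨hbre, hbim⟩ := key_uz b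
  obtain ⟨hrre, hrim⟩ := key_uz r
  set B := uz b * b with hB
  set R := uz r * r with hR
  have hRne : R.im ≠ 0 := by rintro h; rw [h] at him; simp at him
  have hBne : B.im ≠ 0 := by rintro h; rw [h] at him; simp at him
  have hs : sfun r = Int.sign R.im := rfl
  have hRimeq : R.im = sfun r * mm r := by
    rw [hs, ← hrim, Int.sign_mul_abs]
  have hBimeq : B.im = - sfun r * mm b := by
    rw [hs, ← hbim]
    rcases Int.lt_or_lt_of_ne hBne with h | h <;> rcases Int.lt_or_lt_of_ne hRne with h2 | h2 <;>
      rcases abs_cases B.im with ⟨e, _⟩ | ⟨e, _⟩ <;>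
      simp [Int.sign_eq_one_of_pos, Int.sign_eq_neg_one_of_neg, h, h2, e] <;> nlinarith
  have hsq : sfun r * sfun r = 1 := by
    rw [hs]; rcases Int.lt_or_lt_of_ne hRne with h | h <;>
      simp [Int.sign_eq_one_of_pos, Int.sign_eq_neg_one_of_neg, h]
  have hs1 : sfun r = 1 ∨ sfun r = -1 := by
    rcases Int.isUnit_iff.mp (IsUnit.of_mul_eq_one _ hsq) with h | h <;> [left; right] <;> exact h
  have hsubre : (B - R).re = B.re - R.re := by simp [Zsqrtd.re_sub]
  have hsubim : (B - R).im = B.im - R.im := by simp [Zsqrtd.im_sub]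
  have hIRre : (Ii * R).re = -R.im := by simp [Ii, Zsqrtd.re_mul]
  have hIRim : (Ii * R).im = R.re := by simp [Ii, Zsqrtd.im_mul]
  have haddre : (B + sfun r • (Ii * R)).re = B.re + sfun r * (Ii * R).re := by
    simp [Zsqrtd.re_add, Zsqrtd.re_smul]
  have haddim : (B + sfun r • (Ii * R)).im = B.im + sfun r * (Ii * R).im := by
    simp [Zsqrtd.im_add, Zsqrtd.im_smul]
  refine ⟨⟨by rw [hsubre, hbre, hrre], ?_⟩, ⟨?_, ?_⟩⟩
  · rw [hsubim, hBimeq, hRimeq]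
    rcases hs1 with h | h <;> rw [h] <;> [right; left] <;> ring
  · rw [haddre, hIRre, hbre, hRimeq]
    rcases hs1 with h | h <;> rw [h] <;> ring
  · rw [haddim, hIRim, hBimeq, hrre]
    rcases hs1 with h | h <;> rw [h] <;> [right; left] <;> ring
end
end
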